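/- Up to isomorphism there are exactly four commutative associative unital ℂ-algebras of dimension 3: Q¹ = ℂ[x₁,x₂]/(x₁²,x₁x₂,x₂²), Q² = ℂ[x]/(x³), Q³ = ℂ × ℂ[x]/(x²), and Q⁴ = ℂ × ℂ × ℂ. -/

import Mathlib

open Polynomial MvPolynomial in
/-- `Q¹ = ℂ[x₁,x₂]/(x₁²,x₁x₂,x₂²)`. -/
noncomputable def Qone : Type :=
  MvPolynomial (Fin 2) ℂ ⧸ Ideal.span
    {(X 0 : MvPolynomial (Fin 2) ℂ) ^ 2, X 0 * X 1, (X 1 : MvPolynomial (Fin 2) ℂ) ^ 2}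

noncomputable instance : CommRing Qone := Ideal.Quotient.commRing _
noncomputable instance : Algebra ℂ Qone := Ideal.Quotient.algebra ℂ

open Polynomial in
/-- `Q² = ℂ[x]/(x³)`. -/
noncomputable def Qtwo : Type := Polynomial ℂ ⧸ Ideal.span {(X : Polynomial ℂ) ^ 3}

noncomputable instance : CommRing Qtwo := Ideal.Quotient.commRing _
noncomputable instance : Algebra ℂ Qtwo := Ideal.Quotient.algebra ℂ

open Polynomial in
/-- `ℂ[x]/(x²)`. -/
noncomputable def Pone : Type := Polynomial ℂ ⧸ Ideal.span {(X : Polynomial ℂ) ^ 2}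

noncomputable instance : CommRing Pone := Ideal.Quotient.commRing _
noncomputable instance : Algebra ℂ Pone := Ideal.Quotient.algebra ℂ

/-- `Q³ = ℂ × ℂ[x]/(x²)`. -/
noncomputable abbrev Qthree : Type := ℂ × Pone

/-- `Q⁴ = ℂ × ℂ × ℂ`. -/
abbrev Qfour : Type := ℂ × ℂ × ℂ

open Module



section General
variable {B : Type*} [CommRing B] [Algebra ℂ B]

def prodCongrAlg {A₁ A₂ B₁ B₂ : Type*} [CommRing A₁] [Algebra ℂ A₁] [CommRing A₂] [Algebra ℂ A₂]
    [CommRing B₁] [Algebra ℂ B₁] [CommRing B₂] [Algebra ℂ B₂]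
    (e₁ : A₁ ≃ₐ[ℂ] B₁) (e₂ : A₂ ≃ₐ[ℂ] B₂) : (A₁ × A₂) ≃ₐ[ℂ] B₁ × B₂ where
  toFun p := (e₁ p.1, e₂ p.2)
  invFun p := (e₁.symm p.1, e₂.symm p.2)
  left_inv p := by simp
  right_inv p := by simp
  map_mul' p q := by simp [Prod.mul_def]
  map_add' p q := by simp [Prod.add_def]
  commutes' r := by simp [Prod.algebraMap_apply]

def prodCommAlg (A₁ A₂ : Type*) [CommRing A₁] [Algebra ℂ A₁] [CommRing A₂] [Algebra ℂ A₂] :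
    (A₁ × A₂) ≃ₐ[ℂ] A₂ × A₁ where
  toFun p := (p.2, p.1)
  invFun p := (p.2, p.1)
  left_inv p := rfl
  right_inv p := rfl
  map_mul' p q := rfl
  map_add' p q := rfl
  commutes' r := rfl

lemma nontrivial_of_finrank_eq {n : ℕ} (h : finrank ℂ B = n) (hn : n ≠ 0) : Nontrivial B := by
  by_contra hc
  rw [not_nontrivial_iff_subsingleton] at hc
  exact hn (h ▸ (Module.finrank_zero_of_subsingleton (R := ℂ) (M := B)).symm ▸ rfl)

lemma equivComplexOfFinrankOne (h : finrank ℂ B = 1) : Nonempty (ℂ ≃ₐ[ℂ] B) := by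
  have : Nontrivial B := nontrivial_of_finrank_eq h one_ne_zero
  have : FiniteDimensional ℂ B := Module.finite_of_finrank_pos (by omega)
  have hinj : Function.Injective (algebraMap ℂ B) := RingHom.injective _
  have hsurj : Function.Surjective (Algebra.linearMap ℂ B) :=
    (LinearMap.injective_iff_surjective_of_finrank_eq_finrank (by simp [h])).mp hinj
  exact ⟨AlgEquiv.ofBijective (Algebra.ofId ℂ B) ⟨hinj, hsurj⟩⟩

lemma exists_nontrivial_idem [Nontrivial B] [IsArtinianRing B] (h : ¬ IsLocalRing B) :
    ∃ e : B, IsIdempotentElem e ∧ e ≠ 0 ∧ e ≠ 1 := by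
  have hex : ∃ a : B, ¬ IsUnit a ∧ ¬ IsUnit (1 - a) := by
    by_contra hc; push_neg at hc
    exact h (IsLocalRing.of_isUnit_or_isUnit_one_sub_self
      (fun a => or_iff_not_imp_left.mpr (hc a)))
  obtain ⟨a, ha, ha'⟩ := hex
  obtain ⟨n, hn⟩ := IsArtinian.monotone_stabilizes (R := B) (M := B)
    ⟨fun n => OrderDual.toDual (Ideal.span {a ^ n}), by
      intro i j hij
      simp only [OrderDual.toDual_le_toDual]
      apply Ideal.span_le.mpr
      simp only [Set.singleton_subset_iff, SetLike.mem_coe]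
      rw [show j = i + (j - i) by omega, pow_add]
      exact Ideal.mul_mem_right _ _ (Ideal.subset_span rfl)⟩
  set k := n + 1 with hk
  have h1 : Ideal.span {a ^ k} = Ideal.span {a ^ (2 * k)} := by
    have e1 := hn k (by omega)
    have e2 := hn (2 * k) (by omega)
    exact (congrArg OrderDual.ofDual (e1.symm.trans e2) : _)
  have hmem : a ^ k ∈ Ideal.span {a ^ (2 * k)} := h1 ▸ Ideal.subset_span rfl
  obtain ⟨x, hx⟩ := Ideal.mem_span_singleton'.mp hmem
  refine ⟨x * a ^ k, ?_, ?_, ?_⟩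
  · show (x * a ^ k) * (x * a ^ k) = x * a ^ k
    have : (x * a ^ k) * (x * a ^ k) = x * (x * a ^ (2 * k)) := by
      rw [two_mul, pow_add]; ring
    rw [this, hx]
  · intro h0
    apply ha'
    have h2 : (x * a ^ k) * a ^ k = a ^ k := by
      rw [mul_assoc, ← pow_add, show k + k = 2 * k by ring, hx]
    have : a ^ k = 0 := by rw [← h2, h0, zero_mul]
    exact IsNilpotent.isUnit_one_sub ⟨k, this⟩
  · intro h1'
    exact ha ((isUnit_pow_iff (by omega : k ≠ 0)).mp (IsUnit.of_mul_eq_one (a := a ^ k) x (by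
      rw [mul_comm]; exact h1')))

end General

section Split
variable {B : Type*} [CommRing B] [Algebra ℂ B]

lemma quot_span_idem_nontrivial {e : B} (he : IsIdempotentElem e) (h1 : e ≠ 1) :
    Nontrivial (B ⧸ Ideal.span {e}) := by
  refine Ideal.Quotient.nontrivial_iff.mpr ?_
  intro htop
  have : (1 : B) ∈ Ideal.span {e} := htop ▸ Submodule.mem_top
  obtain ⟨y, hy⟩ := Ideal.mem_span_singleton'.mp this
  apply h1
  calc e = 1 * e := (one_mul e).symm
    _ = (y * e) * e := by rw [hy]
    _ = y * (e * e) := by ring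
    _ = y * e := by rw [he]
    _ = 1 := hy

noncomputable def splitHom (e : B) : B →ₐ[ℂ] (B ⧸ Ideal.span {1 - e}) × (B ⧸ Ideal.span {e}) :=
  (Ideal.Quotient.mkₐ ℂ (Ideal.span {1 - e})).prod (Ideal.Quotient.mkₐ ℂ (Ideal.span {e}))

lemma splitHom_bijective {e : B} (he : IsIdempotentElem e) :
    Function.Bijective (splitHom e) := by
  constructor
  · rw [injective_iff_map_eq_zero]
    intro x hx
    rw [Prod.ext_iff] at hx
    obtain ⟨hx1, hx2⟩ := hx
    have m1 : x ∈ Ideal.span {1 - e} := by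
      rwa [← Ideal.Quotient.eq_zero_iff_mem]
    have m2 : x ∈ Ideal.span {e} := by
      rwa [← Ideal.Quotient.eq_zero_iff_mem]
    obtain ⟨u, hu⟩ := Ideal.mem_span_singleton'.mp m1
    obtain ⟨v, hv⟩ := Ideal.mem_span_singleton'.mp m2
    have hxe : x * e = x := by
      calc x * e = (v * e) * e := by rw [hv]
        _ = v * (e * e) := by ring
        _ = v * e := by rw [he]
        _ = x := hv
    have hxe0 : x * e = 0 := by
      calc x * e = (u * (1 - e)) * e := by rw [hu]
        _ = u * (e - e * e) := by ring
        _ = u * (e - e) := by rw [he]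
        _ = 0 := by ring
    rw [← hxe, hxe0]
  · rintro ⟨u, v⟩
    obtain ⟨xu, rfl⟩ := Ideal.Quotient.mk_surjective u
    obtain ⟨xv, rfl⟩ := Ideal.Quotient.mk_surjective v
    refine ⟨xu * e + xv * (1 - e), ?_⟩
    have k1 : Ideal.Quotient.mk (Ideal.span {1 - e}) (1 - e) = 0 :=
      Ideal.Quotient.eq_zero_iff_mem.mpr (Ideal.subset_span rfl)
    have k2 : Ideal.Quotient.mk (Ideal.span {e}) e = 0 :=
      Ideal.Quotient.eq_zero_iff_mem.mpr (Ideal.subset_span rfl)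
    have ke : Ideal.Quotient.mk (Ideal.span {1 - e}) e = 1 := by
      have : Ideal.Quotient.mk (Ideal.span {1 - e}) (1 - e) = 1 - Ideal.Quotient.mk _ e := by
        simp [map_sub]
      rw [this] at k1
      rw [sub_eq_zero] at k1; exact k1.symm
    have ke2 : Ideal.Quotient.mk (Ideal.span {e}) (1 - e) = 1 := by
      simp [map_sub, k2]
    refine Prod.ext ?_ ?_
    · show Ideal.Quotient.mk _ (xu * e + xv * (1 - e)) = Ideal.Quotient.mk _ xu
      rw [map_add, map_mul, map_mul, ke, k1, mul_one, mul_zero, add_zero]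
    · show Ideal.Quotient.mk _ (xu * e + xv * (1 - e)) = Ideal.Quotient.mk _ xv
      rw [map_add, map_mul, map_mul, ke2, k2, mul_one, mul_zero, zero_add]

end Split

section LocalCase
variable {B : Type*} [CommRing B] [Algebra ℂ B]

lemma bij_of_surj_of_finrank_le {C : Type*} [CommRing C] [Algebra ℂ C]
    [FiniteDimensional ℂ C] [FiniteDimensional ℂ B]
    (g : C →ₐ[ℂ] B) (hg : Function.Surjective g) (h : finrank ℂ C ≤ finrank ℂ B) :
    Function.Bijective g := by
  have h2 : finrank ℂ B ≤ finrank ℂ C := by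
    have : LinearMap.range g.toLinearMap = ⊤ := LinearMap.range_eq_top.mpr hg
    calc finrank ℂ B = finrank ℂ (⊤ : Submodule ℂ B) := (finrank_top ℂ B).symm
      _ = finrank ℂ (LinearMap.range g.toLinearMap) := by rw [this]
      _ ≤ finrank ℂ C := g.toLinearMap.finrank_range_le
  have heq : finrank ℂ C = finrank ℂ B := le_antisymm h h2
  refine ⟨?_, hg⟩
  have := (LinearMap.injective_iff_surjective_of_finrank_eq_finrank
    (f := g.toLinearMap) heq).mpr hg
  exact this

lemma fd_of_mf {C : Type*} [CommRing C] [Algebra ℂ C] [Module.Finite ℂ C] :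
    FiniteDimensional ℂ C := ‹_›

variable [IsLocalRing B] [FiniteDimensional ℂ B]

lemma finrank_quot_max : finrank ℂ (B ⧸ IsLocalRing.maximalIdeal B) = 1 := by
  set K := B ⧸ IsLocalRing.maximalIdeal B with hK
  haveI : Module.Finite ℂ K := Module.Finite.of_surjective
    (Ideal.Quotient.mkₐ ℂ _).toLinearMap Ideal.Quotient.mk_surjective
  have hsurj : Function.Surjective (algebraMap ℂ K) :=
    (IsAlgClosed.algebraMap_bijective_of_isIntegral (k := ℂ)).2
  have hinj : Function.Injective (algebraMap ℂ K) := RingHom.injective _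
  have e : ℂ ≃ₗ[ℂ] K := LinearEquiv.ofBijective (Algebra.linearMap ℂ K) ⟨hinj, hsurj⟩
  rw [← e.finrank_eq, Module.finrank_self]

lemma finrank_max_restrict :
    finrank ℂ ((IsLocalRing.maximalIdeal B).restrictScalars ℂ) + 1 = finrank ℂ B := by
  have e := Submodule.Quotient.restrictScalarsEquiv ℂ (IsLocalRing.maximalIdeal B)
  have h1 : finrank ℂ (B ⧸ (IsLocalRing.maximalIdeal B).restrictScalars ℂ) = 1 := by
    rw [e.finrank_eq]; exact finrank_quot_max
  have := Submodule.finrank_quotient_add_finrank ((IsLocalRing.maximalIdeal B).restrictScalars ℂ)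
  rw [h1] at this
  omega

lemma max_mul_self_ne (hm : IsLocalRing.maximalIdeal B ≠ ⊥) :
    IsLocalRing.maximalIdeal B * IsLocalRing.maximalIdeal B ≠ IsLocalRing.maximalIdeal B := by
  intro h
  apply hm
  haveI : IsNoetherian B B := isNoetherian_of_tower ℂ inferInstance
  refine Submodule.eq_bot_of_le_smul_of_le_jacobson_bot (IsLocalRing.maximalIdeal B) _
    (IsNoetherian.noetherian _) ?_ ?_
  · rw [Ideal.smul_eq_mul, h]
  · rw [IsLocalRing.jacobson_eq_maximalIdeal ⊥ bot_ne_top]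

lemma top_eq_span_one_sup (p : Submodule ℂ B) (hq : finrank ℂ (B ⧸ p) = 1) (h1 : (1:B) ∉ p) :
    (⊤ : Submodule ℂ B) = Submodule.span ℂ {(1:B)} ⊔ p := by
  have hne : p.mkQ 1 ≠ 0 := by
    intro h
    exact h1 (by simpa [Submodule.Quotient.mk_eq_zero] using h)
  have hspan : Submodule.span ℂ {p.mkQ 1} = ⊤ := by
    apply Submodule.eq_top_of_finrank_eq
    rw [finrank_span_singleton hne, hq]
  refine le_antisymm ?_ le_top
  intro x _
  have hx : p.mkQ x ∈ Submodule.span ℂ {p.mkQ 1} := hspan ▸ Submodule.mem_top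
  obtain ⟨c, hc⟩ := Submodule.mem_span_singleton.mp hx
  have hmem : x - c • 1 ∈ p := by
    have h0 : p.mkQ (x - c • 1) = 0 := by
      rw [map_sub, map_smul, hc, sub_self]
    rwa [Submodule.mkQ_apply, Submodule.Quotient.mk_eq_zero] at h0
  have : x = c • 1 + (x - c • 1) := by ring
  rw [this]
  exact Submodule.add_mem_sup
    (Submodule.smul_mem _ c (Submodule.mem_span_singleton_self 1)) hmem

end LocalCase
open Module

section Models
open Polynomial

noncomputable def polyMk (k : ℕ) :
    Polynomial ℂ →ₐ[ℂ] (Polynomial ℂ ⧸ Ideal.span {(X : Polynomial ℂ) ^ k}) :=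
  Ideal.Quotient.mkₐ ℂ _

lemma polyMk_pow_zero (k n : ℕ) (h : k ≤ n) : polyMk k (X ^ n) = 0 := by
  rw [show polyMk k (X ^ n) = Ideal.Quotient.mk _ (X ^ n) from rfl,
    Ideal.Quotient.eq_zero_iff_mem]
  exact Ideal.mem_span_singleton.mpr (pow_dvd_pow X h)

lemma polyMk_pow_ne_zero (k n : ℕ) (h : n < k) : polyMk k (X ^ n) ≠ 0 := by
  intro h0
  rw [show polyMk k (X ^ n) = Ideal.Quotient.mk _ (X ^ n) from rfl,
    Ideal.Quotient.eq_zero_iff_mem, Ideal.mem_span_singleton] at h0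
  have := Polynomial.natDegree_le_of_dvd h0 (pow_ne_zero _ X_ne_zero)
  simp only [natDegree_pow, natDegree_X, mul_one] at this
  omega

lemma polyQuot_span (k : ℕ) :
    (⊤ : Submodule ℂ (Polynomial ℂ ⧸ Ideal.span {(X : Polynomial ℂ) ^ k})) =
      Submodule.span ℂ (Set.range fun i : Fin k => polyMk k X ^ (i : ℕ)) := by
  refine le_antisymm ?_ le_top
  rintro z -
  obtain ⟨p, rfl⟩ := Ideal.Quotient.mk_surjective z
  rw [show Ideal.Quotient.mk (Ideal.span {(X : Polynomial ℂ) ^ k}) p = polyMk k p from rfl]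
  induction p using Polynomial.induction_on' with
  | add p q hp hq => rw [map_add]; exact Submodule.add_mem _ hp hq
  | monomial n a =>
      have hC : polyMk k (C a) = algebraMap ℂ _ a := by
        rw [show (C a : Polynomial ℂ) = algebraMap ℂ (Polynomial ℂ) a from rfl]
        exact (polyMk k).commutes a
      have hrw : polyMk k (monomial n a) = a • (polyMk k X) ^ n := by
        rw [← C_mul_X_pow_eq_monomial, map_mul, hC, map_pow, ← Algebra.smul_def]
      rw [hrw]
      by_cases hn : n < k
      · exact Submodule.smul_mem _ _ (Submodule.subset_span ⟨⟨n, hn⟩, rfl⟩)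
      · rw [← map_pow, polyMk_pow_zero k n (not_lt.mp hn), smul_zero]
        exact Submodule.zero_mem _

noncomputable def polyEps (k : ℕ) (hk : k ≠ 0) :
    (Polynomial ℂ ⧸ Ideal.span {(X : Polynomial ℂ) ^ k}) →ₐ[ℂ] ℂ :=
  Ideal.Quotient.liftₐ _ (aeval 0) (by
    intro a ha
    rw [Ideal.mem_span_singleton] at ha
    obtain ⟨q, rfl⟩ := ha
    rw [map_mul, map_pow, aeval_X]
    rw [zero_pow hk, zero_mul])

lemma polyEps_mk (k : ℕ) (hk : k ≠ 0) (p : Polynomial ℂ) :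
    polyEps k hk (polyMk k p) = aeval (0 : ℂ) p := rfl

lemma polyQuot_nontrivial (k : ℕ) (hk : k ≠ 0) :
    Nontrivial (Polynomial ℂ ⧸ Ideal.span {(X : Polynomial ℂ) ^ k}) := by
  refine nontrivial_of_ne 0 1 fun h => ?_
  have := congrArg (polyEps k hk) h
  rw [map_zero, map_one] at this
  exact zero_ne_one this

end Models

section LocalGeneral
variable {R : Type*} [CommRing R] [Algebra ℂ R]

lemma decomp_of_gen {ι : Type*} {v : ι → R}
    (hv : (⊤ : Submodule ℂ R) = Submodule.span ℂ (Set.range v))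
    (hgen : ∀ i, v i ∈ Submodule.span ℂ {(1 : R)} ⊔ (nilradical R).restrictScalars ℂ) :
    ∀ a : R, ∃ c : ℂ, IsNilpotent (a - algebraMap ℂ R c) := by
  intro a
  have ha : a ∈ Submodule.span ℂ {(1 : R)} ⊔ (nilradical R).restrictScalars ℂ := by
    have h1 : a ∈ Submodule.span ℂ (Set.range v) := hv ▸ Submodule.mem_top
    refine Submodule.span_le.mpr ?_ h1
    rintro x ⟨i, rfl⟩; exact hgen i
  obtain ⟨u, hu, w, hw, rfl⟩ := Submodule.mem_sup.mp ha
  obtain ⟨c, rfl⟩ := Submodule.mem_span_singleton.mp hu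
  refine ⟨c, ?_⟩
  have h2 : c • (1 : R) + w - algebraMap ℂ R c = w := by
    rw [Algebra.algebraMap_eq_smul_one]; ring
  rw [h2]; exact hw

lemma isLocal_of_decomp [Nontrivial R]
    (h : ∀ a : R, ∃ c : ℂ, IsNilpotent (a - algebraMap ℂ R c)) : IsLocalRing R := by
  apply IsLocalRing.of_isUnit_or_isUnit_one_sub_self
  intro a
  obtain ⟨c, hc⟩ := h a
  by_cases h0 : c = 0
  · right
    subst h0
    rw [map_zero, sub_zero] at hc
    exact hc.isUnit_one_sub
  · left
    have hu : IsUnit (algebraMap ℂ R c) := (isUnit_iff_ne_zero.mpr h0).map (algebraMap ℂ R)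
    have h2 : a = algebraMap ℂ R c + (a - algebraMap ℂ R c) := by ring
    rw [h2]
    exact hc.isUnit_add_left_of_commute hu (Commute.all _ _)

lemma mul_eq_zero_span {s : Set R} (h : ∀ u ∈ s, ∀ w ∈ s, u * w = 0) :
    ∀ l ∈ Submodule.span ℂ s, ∀ l' ∈ Submodule.span ℂ s, l * l' = 0 := by
  intro l hl
  induction hl using Submodule.span_induction with
  | mem u hu =>
      intro l' hl'
      induction hl' using Submodule.span_induction with
      | mem w hw => exact h u hu w hw
      | zero => rw [mul_zero]
      | add x y _ _ hx hy => rw [mul_add, hx, hy, add_zero]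
      | smul c x _ hx => rw [mul_smul_comm, hx, smul_zero]
  | zero => intro l' _; rw [zero_mul]
  | add x y _ _ hx hy => intro l' hl'; rw [add_mul, hx l' hl', hy l' hl', add_zero]
  | smul c x _ hx => intro l' hl'; rw [smul_mul_assoc, hx l' hl', smul_zero]

end LocalGeneral

section QoneStudy
open MvPolynomial

noncomputable def IQone : Ideal (MvPolynomial (Fin 2) ℂ) :=
  Ideal.span {(X 0 : MvPolynomial (Fin 2) ℂ) ^ 2, X 0 * X 1, (X 1 : MvPolynomial (Fin 2) ℂ) ^ 2}

noncomputable def mvMk : MvPolynomial (Fin 2) ℂ →ₐ[ℂ] Qone := Ideal.Quotient.mkₐ ℂ IQone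

noncomputable def yy (i : Fin 2) : Qone := mvMk (X i)

lemma mvMk_surjective : Function.Surjective mvMk := Ideal.Quotient.mk_surjective

lemma yy_mul_yy (i j : Fin 2) : yy i * yy j = 0 := by
  rw [yy, yy, ← map_mul,
    show mvMk (X i * X j) = Ideal.Quotient.mk IQone (X i * X j) from rfl]
  refine Ideal.Quotient.eq_zero_iff_mem.mpr ?_
  rw [IQone]
  fin_cases i <;> fin_cases j <;> refine Ideal.subset_span ?_ <;>
    simp [pow_two, mul_comm]

noncomputable def vQone : Fin 3 → Qone := ![1, yy 0, yy 1]

lemma qone_span : (⊤ : Submodule ℂ Qone) = Submodule.span ℂ (Set.range vQone) := by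
  refine le_antisymm ?_ le_top
  rintro z -
  obtain ⟨p, rfl⟩ := mvMk_surjective z
  induction p using MvPolynomial.induction_on with
  | C a =>
      have : mvMk (C a) = a • vQone 0 := by
        rw [show (C a : MvPolynomial (Fin 2) ℂ) = algebraMap ℂ _ a from rfl, AlgHom.commutes,
          Algebra.algebraMap_eq_smul_one]
        rfl
      rw [this]
      exact Submodule.smul_mem _ _ (Submodule.subset_span ⟨0, rfl⟩)
  | add p q hp hq => rw [map_add]; exact Submodule.add_mem _ hp hq
  | mul_X p i hp =>
      rw [map_mul, show mvMk (X i) = yy i from rfl]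
      revert hp
      generalize mvMk p = z
      intro hz
      induction hz using Submodule.span_induction with
      | mem u hu =>
          obtain ⟨j, rfl⟩ := hu
          fin_cases j
          · show (1 : Qone) * yy i ∈ _
            rw [one_mul]
            fin_cases i
            · exact Submodule.subset_span ⟨1, rfl⟩
            · exact Submodule.subset_span ⟨2, rfl⟩
          · show yy 0 * yy i ∈ _
            rw [yy_mul_yy]; exact Submodule.zero_mem _
          · show yy 1 * yy i ∈ _
            rw [yy_mul_yy]; exact Submodule.zero_mem _
      | zero => rw [zero_mul]; exact Submodule.zero_mem _
      | add x y _ _ hx hy => rw [add_mul]; exact Submodule.add_mem _ hx hy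
      | smul c x _ hx => rw [smul_mul_assoc]; exact Submodule.smul_mem _ _ hx

noncomputable instance : Module.Finite ℂ Qone :=
  ⟨Submodule.fg_def.mpr ⟨Set.range vQone, Set.toFinite _, qone_span.symm⟩⟩

lemma qone_finrank_le : finrank ℂ Qone ≤ 3 := by
  simpa using finrank_le_of_span_eq_top (M := Qone) (v := vQone) qone_span.symm

noncomputable def epsQone : Qone →ₐ[ℂ] ℂ :=
  Ideal.Quotient.liftₐ IQone (aeval fun _ => (0 : ℂ)) (by
    intro a ha
    have hle : IQone ≤ RingHom.ker (aeval fun _ => (0 : ℂ) : MvPolynomial (Fin 2) ℂ →ₐ[ℂ] ℂ) := by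
      rw [IQone]
      refine Ideal.span_le.mpr ?_
      intro q hq
      simp only [Set.mem_insert_iff, Set.mem_singleton_iff] at hq
      rcases hq with rfl | rfl | rfl <;>
        simp [RingHom.mem_ker]
    exact hle ha)

lemma epsQone_yy (i : Fin 2) : epsQone (yy i) = 0 := by
  show epsQone (mvMk (X i)) = 0
  rw [show epsQone (mvMk (X i)) = aeval (fun _ => (0:ℂ)) (X i) from rfl]
  simp

instance : Nontrivial Qone := by
  refine nontrivial_of_ne 0 1 fun h => ?_
  have := congrArg epsQone h
  rw [map_zero, map_one] at this
  exact zero_ne_one this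

lemma yy_nilpotent (i : Fin 2) : IsNilpotent (yy i) :=
  ⟨2, by rw [pow_two, yy_mul_yy]⟩

instance : IsLocalRing Qone := by
  apply isLocal_of_decomp
  apply decomp_of_gen qone_span
  intro i
  fin_cases i
  · exact Submodule.mem_sup_left (Submodule.mem_span_singleton_self _)
  · exact Submodule.mem_sup_right (by exact mem_nilradical.mpr (yy_nilpotent 0))
  · exact Submodule.mem_sup_right (by exact mem_nilradical.mpr (yy_nilpotent 1))

lemma qone_cube : ∀ a : Qone, a ^ 3 = 0 → a ^ 2 = 0 := by
  intro a ha
  have hmem : a ∈ Submodule.span ℂ {(1 : Qone)} ⊔ Submodule.span ℂ {yy 0, yy 1} := by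
    have h1 : a ∈ Submodule.span ℂ (Set.range vQone) := qone_span ▸ Submodule.mem_top
    refine Submodule.span_le.mpr ?_ h1
    rintro x ⟨j, rfl⟩
    fin_cases j
    · exact Submodule.mem_sup_left (Submodule.mem_span_singleton_self _)
    · exact Submodule.mem_sup_right (Submodule.subset_span (by simp [vQone]))
    · exact Submodule.mem_sup_right (Submodule.subset_span (by simp [vQone]))
  obtain ⟨u, hu, l, hl, rfl⟩ := Submodule.mem_sup.mp hmem
  obtain ⟨c, rfl⟩ := Submodule.mem_span_singleton.mp hu
  have hmul : ∀ w ∈ Submodule.span ℂ {yy 0, yy 1}, l * w = 0 := by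
    intro w hw
    refine mul_eq_zero_span ?_ l hl w hw
    intro u hu w' hw'
    simp only [Set.mem_insert_iff, Set.mem_singleton_iff] at hu hw'
    rcases hu with rfl | rfl <;> rcases hw' with rfl | rfl <;> exact yy_mul_yy _ _
  have hl2 : l * l = 0 := hmul l hl
  have hleps : epsQone l = 0 := by
    have hle : Submodule.span ℂ {yy 0, yy 1} ≤ LinearMap.ker epsQone.toLinearMap := by
      refine Submodule.span_le.mpr ?_
      intro x hx
      simp only [Set.mem_insert_iff, Set.mem_singleton_iff] at hx
      rcases hx with rfl | rfl <;>
        simp [LinearMap.mem_ker, epsQone_yy]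
    simpa using hle hl
  set C := algebraMap ℂ Qone c with hC
  have hsmul : c • (1 : Qone) = C := (Algebra.algebraMap_eq_smul_one c).symm
  rw [hsmul] at ha ⊢
  -- show c = 0
  have heps : epsQone (C + l) = c := by
    rw [map_add, hleps, add_zero, hC, AlgHom.commutes]
    rfl
  have hc3 : c ^ 3 = 0 := by
    have := congrArg epsQone ha
    rw [map_pow, map_zero, heps] at this
    exact this
  have hc : c = 0 := pow_eq_zero_iff (by omega) |>.mp hc3
  subst hc
  rw [hC, map_zero, zero_add] at *
  rw [pow_two, hl2]

end QoneStudy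

section QtwoStudy
open Polynomial

noncomputable def xQ2 : Qtwo := polyMk 3 X

lemma qtwo_span : (⊤ : Submodule ℂ Qtwo) =
    Submodule.span ℂ (Set.range fun i : Fin 3 => xQ2 ^ (i : ℕ)) := polyQuot_span 3

noncomputable instance : Module.Finite ℂ Qtwo :=
  ⟨Submodule.fg_def.mpr ⟨_, Set.toFinite _, qtwo_span.symm⟩⟩

lemma qtwo_finrank_le : finrank ℂ Qtwo ≤ 3 := by
  simpa using finrank_le_of_span_eq_top (v := fun i : Fin 3 => xQ2 ^ (i : ℕ)) qtwo_span.symm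

instance : Nontrivial Qtwo := polyQuot_nontrivial 3 (by omega)

lemma xQ2_cube : xQ2 ^ 3 = 0 :=
  (map_pow (polyMk 3) X 3).symm.trans (polyMk_pow_zero 3 3 le_rfl)

lemma xQ2_sq_ne : xQ2 ^ 2 ≠ 0 := by
  intro h
  exact polyMk_pow_ne_zero 3 2 (by omega) ((map_pow (polyMk 3) X 2).trans h)

instance : IsLocalRing Qtwo := by
  apply isLocal_of_decomp
  apply decomp_of_gen qtwo_span
  intro i
  by_cases hi : (i : ℕ) = 0
  · rw [hi, pow_zero]
    exact Submodule.mem_sup_left (Submodule.mem_span_singleton_self _)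
  · refine Submodule.mem_sup_right (by
      refine mem_nilradical.mpr ⟨3, ?_⟩
      rw [← pow_mul, mul_comm, pow_mul, xQ2_cube, zero_pow hi])

end QtwoStudy

section PoneStudy
open Polynomial

noncomputable def xP : Pone := polyMk 2 X

lemma pone_span : (⊤ : Submodule ℂ Pone) =
    Submodule.span ℂ (Set.range fun i : Fin 2 => xP ^ (i : ℕ)) := polyQuot_span 2

noncomputable instance : Module.Finite ℂ Pone :=
  ⟨Submodule.fg_def.mpr ⟨_, Set.toFinite _, pone_span.symm⟩⟩

lemma pone_finrank_le : finrank ℂ Pone ≤ 2 := by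
  simpa using finrank_le_of_span_eq_top (v := fun i : Fin 2 => xP ^ (i : ℕ)) pone_span.symm

instance : Nontrivial Pone := polyQuot_nontrivial 2 (by omega)

lemma xP_sq : xP ^ 2 = 0 :=
  (map_pow (polyMk 2) X 2).symm.trans (polyMk_pow_zero 2 2 le_rfl)

lemma xP_ne : xP ≠ 0 := by
  have := polyMk_pow_ne_zero 2 1 (by omega)
  rwa [pow_one] at this

end PoneStudy

section NonLocal

lemma not_isLocalRing_of_idem {R : Type*} [CommRing R] (e : R) (he : IsIdempotentElem e)
    (h0 : e ≠ 0) (h1 : e ≠ 1) : ¬ IsLocalRing R := by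
  intro hR
  rcases IsLocalRing.isUnit_or_isUnit_one_sub_self e with hu | hu
  · exact h1 (hu.mul_left_cancel (by rw [he, mul_one]))
  · refine h0 ?_
    have h2 : (1 - e) * (1 - e) = 1 - e := by
      have := he
      unfold IsIdempotentElem at this
      ring_nf
      linear_combination this
    have h3 : (1 - e) = 1 := hu.mul_left_cancel (by rw [h2, mul_one])
    linear_combination -h3

lemma not_local_Qthree : ¬ IsLocalRing (ℂ × Pone) := by
  refine not_isLocalRing_of_idem (1, 0) (Prod.ext (by simp) (by simp)) ?_ ?_
  · intro h; exact one_ne_zero (congrArg Prod.fst h)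
  · intro h; exact zero_ne_one (congrArg Prod.snd h)

lemma not_local_Qfour : ¬ IsLocalRing (ℂ × ℂ × ℂ) := by
  refine not_isLocalRing_of_idem (1, 0) (Prod.ext (by simp) (by simp)) ?_ ?_
  · intro h; exact one_ne_zero (congrArg Prod.fst h)
  · intro h; exact zero_ne_one (congrArg (fun p => p.2.1) h)

end NonLocal

section Classification
variable {B : Type*} [CommRing B] [Algebra ℂ B]

lemma finrank_quot_restrict [IsLocalRing B] [FiniteDimensional ℂ B] :
    finrank ℂ (B ⧸ (IsLocalRing.maximalIdeal B).restrictScalars ℂ) = 1 := by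
  rw [(Submodule.Quotient.restrictScalarsEquiv ℂ (IsLocalRing.maximalIdeal B)).finrank_eq]
  exact finrank_quot_max

lemma one_not_mem_max_restrict [IsLocalRing B] :
    (1 : B) ∉ (IsLocalRing.maximalIdeal B).restrictScalars ℂ := by
  intro h
  exact IsLocalRing.mem_maximalIdeal (1 : B) |>.mp h isUnit_one

lemma local_dim_two [IsLocalRing B] [FiniteDimensional ℂ B]
    (h2 : finrank ℂ B = 2) : Nonempty (B ≃ₐ[ℂ] Pone) := by
  classical
  set m := IsLocalRing.maximalIdeal B with hm
  set p := m.restrictScalars ℂ with hp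
  have hpr : finrank ℂ p = 1 := by
    have h := finrank_max_restrict (B := B)
    rw [← hm] at h
    rw [← hp] at h
    omega
  have hpne : p ≠ ⊥ := by
    intro h; rw [h] at hpr; simp at hpr
  have hmne : m ≠ ⊥ := by
    intro h; apply hpne; rw [hp, h]; rfl
  have hmm := max_mul_self_ne (B := B) hmne
  have hqlt : (m * m).restrictScalars ℂ < p := by
    refine lt_of_le_of_ne (fun x hx => Ideal.mul_le_left hx) fun h => hmm ?_
    exact Submodule.restrictScalars_injective ℂ _ _ h
  have hq0 : m * m = ⊥ := by
    have h1 := Submodule.finrank_lt_finrank_of_lt hqlt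
    have h2 : finrank ℂ ((m * m).restrictScalars ℂ) = 0 := by omega
    have := Submodule.finrank_eq_zero.mp h2
    exact Submodule.restrictScalars_injective ℂ _ _ (by rw [this]; rfl)
  -- generator of p
  obtain ⟨t, htp, htne⟩ := Submodule.exists_mem_ne_zero_of_ne_bot hpne
  have hspan : Submodule.span ℂ {t} = p := by
    apply Submodule.eq_of_le_of_finrank_le
      (Submodule.span_le.mpr (Set.singleton_subset_iff.mpr htp))
    rw [finrank_span_singleton htne]; exact hpr.le
  have htt : t * t = 0 := by
    have h1 : t * t ∈ m * m := Ideal.mul_mem_mul htp htp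
    rw [hq0] at h1
    simpa using h1
  set f : Polynomial ℂ →ₐ[ℂ] B := Polynomial.aeval t with hf
  have htop : (⊤ : Submodule ℂ B) = Submodule.span ℂ {1} ⊔ p :=
    top_eq_span_one_sup p finrank_quot_restrict one_not_mem_max_restrict
  have hfsurj : Function.Surjective f := by
    intro b
    have hb : b ∈ Submodule.span ℂ {(1:B)} ⊔ p := htop ▸ Submodule.mem_top
    obtain ⟨u, hu, w, hw, rfl⟩ := Submodule.mem_sup.mp hb
    obtain ⟨c, rfl⟩ := Submodule.mem_span_singleton.mp hu
    rw [← hspan] at hw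
    obtain ⟨d, rfl⟩ := Submodule.mem_span_singleton.mp hw
    refine ⟨Polynomial.C c + Polynomial.C d * Polynomial.X, ?_⟩
    rw [hf, map_add, map_mul, Polynomial.aeval_C, Polynomial.aeval_C, Polynomial.aeval_X,
      Algebra.algebraMap_eq_smul_one, Algebra.algebraMap_eq_smul_one, smul_mul_assoc, one_mul]
  have hker : ∀ a ∈ Ideal.span {(Polynomial.X : Polynomial ℂ) ^ 2}, f a = 0 := by
    intro a ha
    rw [Ideal.mem_span_singleton] at ha
    obtain ⟨q, rfl⟩ := ha
    rw [map_mul, map_pow, hf, Polynomial.aeval_X, pow_two, htt, zero_mul]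
  set g : Pone →ₐ[ℂ] B := Ideal.Quotient.liftₐ _ f hker with hg
  have hgsurj : Function.Surjective g := by
    intro b
    obtain ⟨q, hq⟩ := hfsurj b
    exact ⟨polyMk 2 q, by rw [show g (polyMk 2 q) = f q from rfl, hq]⟩
  have hbij := @bij_of_surj_of_finrank_le _ _ _ _ _ _ fd_of_mf _ g hgsurj (pone_finrank_le.trans (by omega))
  exact ⟨(AlgEquiv.ofBijective g hbij).symm⟩

lemma local_dim_three [IsLocalRing B] [FiniteDimensional ℂ B]
    (h3 : finrank ℂ B = 3) :
    Nonempty (B ≃ₐ[ℂ] Qone) ∨ Nonempty (B ≃ₐ[ℂ] Qtwo) := by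
  classical
  set m := IsLocalRing.maximalIdeal B with hm
  set p := m.restrictScalars ℂ with hp
  have hpr : finrank ℂ p = 2 := by
    have h := finrank_max_restrict (B := B)
    rw [← hm] at h; rw [← hp] at h; omega
  have hpne : p ≠ ⊥ := by intro h; rw [h] at hpr; simp at hpr
  have hmne : m ≠ ⊥ := fun h => hpne (by rw [hp, h]; rfl)
  have hmm := max_mul_self_ne (B := B) hmne
  have hqle : (m * m).restrictScalars ℂ ≤ p := fun x hx => Ideal.mul_le_left hx
  have hqlt : (m * m).restrictScalars ℂ < p :=
    lt_of_le_of_ne hqle fun h => hmm (Submodule.restrictScalars_injective ℂ _ _ h)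
  have hqfr := Submodule.finrank_lt_finrank_of_lt hqlt
  rw [hpr] at hqfr
  have htop : (⊤ : Submodule ℂ B) = Submodule.span ℂ {1} ⊔ p :=
    top_eq_span_one_sup p finrank_quot_restrict one_not_mem_max_restrict
  by_cases hq0 : finrank ℂ ((m * m).restrictScalars ℂ) = 0
  · left
    have hbot : m * m = ⊥ :=
      Submodule.restrictScalars_injective ℂ _ _ (by rw [Submodule.finrank_eq_zero.mp hq0]; rfl)
    set b := Module.finBasisOfFinrankEq ℂ p hpr with hb
    set t : Fin 2 → B := fun i => (b i : B) with ht
    have htm : ∀ i, t i ∈ m := fun i => (b i).2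
    have htspan : Submodule.span ℂ (Set.range t) = p := by
      have h1 : Submodule.span ℂ (Set.range b) = (⊤ : Submodule ℂ p) := b.span_eq
      have h2 := congrArg (Submodule.map p.subtype) h1
      rw [Submodule.map_span, Submodule.map_top, Submodule.range_subtype] at h2
      rw [← h2]
      congr 1
      rw [← Set.range_comp]
      rfl
    have httzero : ∀ i j, t i * t j = 0 := by
      intro i j
      have h1 : t i * t j ∈ m * m := Ideal.mul_mem_mul (htm i) (htm j)
      rw [hbot] at h1; simpa using h1
    set f : MvPolynomial (Fin 2) ℂ →ₐ[ℂ] B := MvPolynomial.aeval t with hf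
    have hfsurj : Function.Surjective f := by
      have hrange : (⊤ : Submodule ℂ B) ≤ Subalgebra.toSubmodule f.range := by
        rw [htop]
        refine sup_le ?_ ?_
        · rw [Submodule.span_le, Set.singleton_subset_iff]
          exact (Subalgebra.mem_toSubmodule _).mpr (one_mem _)
        · rw [← htspan, Submodule.span_le]
          rintro x ⟨i, rfl⟩
          exact (Subalgebra.mem_toSubmodule _).mpr ⟨MvPolynomial.X i, by rw [hf]; simp⟩
      intro x
      exact (Subalgebra.mem_toSubmodule _).mp (hrange Submodule.mem_top)
    have hker : ∀ a ∈ IQone, f a = 0 := by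
      intro a ha
      have hle : IQone ≤ RingHom.ker f := by
        rw [IQone]
        refine Ideal.span_le.mpr ?_
        intro q hq
        simp only [Set.mem_insert_iff, Set.mem_singleton_iff] at hq
        rcases hq with rfl | rfl | rfl <;>
          simp [RingHom.mem_ker, hf, pow_two, httzero]
      exact hle ha
    set g : Qone →ₐ[ℂ] B := Ideal.Quotient.liftₐ IQone f hker with hg
    have hgsurj : Function.Surjective g := by
      intro x
      obtain ⟨q, hq⟩ := hfsurj x
      exact ⟨mvMk q, by rw [show g (mvMk q) = f q from rfl, hq]⟩
    have hbij := @bij_of_surj_of_finrank_le _ _ _ _ _ _ fd_of_mf _ g hgsurj (qone_finrank_le.trans (by omega))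
    exact ⟨(AlgEquiv.ofBijective g hbij).symm⟩
  · right
    have hq1 : finrank ℂ ((m * m).restrictScalars ℂ) = 1 := by omega
    obtain ⟨t, htp, htq⟩ := SetLike.exists_of_lt hqlt
    have htne : t ≠ 0 := fun h => htq (h ▸ Submodule.zero_mem _)
    have hrle : ((m * m) * m).restrictScalars ℂ ≤ (m * m).restrictScalars ℂ :=
      fun x hx => (Ideal.mul_le_left : (m * m) * m ≤ m * m) hx
    have hrne : (m * m) * m ≠ m * m := by
      intro h
      apply hq0
      haveI : IsNoetherian B B := isNoetherian_of_tower ℂ inferInstance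
      have hbot : m * m = ⊥ := by
        refine Submodule.eq_bot_of_le_smul_of_le_jacobson_bot m _ (IsNoetherian.noetherian _) ?_ ?_
        · rw [Ideal.smul_eq_mul, mul_comm m (m * m), h]
        · rw [hm, IsLocalRing.jacobson_eq_maximalIdeal ⊥ bot_ne_top]
      rw [hbot]
      rw [show ((⊥ : Ideal B)).restrictScalars ℂ = (⊥ : Submodule ℂ B) from rfl]
      exact finrank_bot ℂ B
    have hrlt : ((m * m) * m).restrictScalars ℂ < (m * m).restrictScalars ℂ :=
      lt_of_le_of_ne hrle fun h => hrne (Submodule.restrictScalars_injective ℂ _ _ h)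
    have hrfr := Submodule.finrank_lt_finrank_of_lt hrlt
    rw [hq1] at hrfr
    have hr0 : (m * m) * m = ⊥ := by
      apply Submodule.restrictScalars_injective ℂ
      have h0 : finrank ℂ (((m * m) * m).restrictScalars ℂ) = 0 := by omega
      rw [Submodule.finrank_eq_zero.mp h0]; rfl
    have hdisj : Submodule.span ℂ {t} ⊓ (m * m).restrictScalars ℂ = ⊥ := by
      rw [Submodule.eq_bot_iff]
      rintro x ⟨hx1, hx2⟩
      obtain ⟨c, rfl⟩ := Submodule.mem_span_singleton.mp hx1
      by_cases hc : c = 0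
      · rw [hc, zero_smul]
      · exfalso
        apply htq
        have hct : t = c⁻¹ • (c • t) := by rw [smul_smul, inv_mul_cancel₀ hc, one_smul]
        rw [hct]
        exact Submodule.smul_mem _ _ hx2
    have hsupfr : finrank ℂ ↥(Submodule.span ℂ {t} ⊔ (m * m).restrictScalars ℂ) = 2 := by
      have hh := Submodule.finrank_sup_add_finrank_inf_eq (Submodule.span ℂ {t})
        ((m * m).restrictScalars ℂ)
      rw [hdisj, finrank_bot, finrank_span_singleton htne, hq1] at hh
      omega
    have hps : Submodule.span ℂ {t} ⊔ (m * m).restrictScalars ℂ = p := by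
      apply Submodule.eq_of_le_of_finrank_le
      · exact sup_le (Submodule.span_le.mpr (Set.singleton_subset_iff.mpr htp)) hqle
      · rw [hsupfr, hpr]
    have hprod : ∀ u ∈ m, ∀ v ∈ m, u * v ∈ Submodule.span ℂ {t * t} := by
      intro u hu v hv
      obtain ⟨u1, hu1, w, hw, rfl⟩ := Submodule.mem_sup.mp
        (show u ∈ Submodule.span ℂ {t} ⊔ (m * m).restrictScalars ℂ from hps.symm ▸ hu)
      obtain ⟨v1, hv1, w', hw', rfl⟩ := Submodule.mem_sup.mp
        (show v ∈ Submodule.span ℂ {t} ⊔ (m * m).restrictScalars ℂ from hps.symm ▸ hv)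
      obtain ⟨c, rfl⟩ := Submodule.mem_span_singleton.mp hu1
      obtain ⟨d, rfl⟩ := Submodule.mem_span_singleton.mp hv1
      have hw2 : w ∈ m * m := hw
      have hw'2 : w' ∈ m * m := hw'
      have e1 : t * w' = 0 := by
        have hmem := Ideal.mul_mem_mul hw'2 htp
        rw [hr0] at hmem
        have : w' * t = 0 := by simpa using hmem
        rw [mul_comm] at this
        exact this
      have e2 : w * t = 0 := by
        have hmem := Ideal.mul_mem_mul hw2 htp
        rw [hr0] at hmem
        simpa using hmem
      have e3 : w * w' = 0 := by
        have hmem := Ideal.mul_mem_mul hw2 hw'2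
        have hle2 : (m * m) * (m * m) ≤ (m * m) * m := Ideal.mul_mono_right Ideal.mul_le_left
        have := hle2 hmem
        rw [hr0] at this
        simpa using this
      have key : (c • t + w) * (d • t + w') = (c * d) • (t * t) := by
        rw [Algebra.smul_def, Algebra.smul_def, Algebra.smul_def, map_mul]
        calc (algebraMap ℂ B c * t + w) * (algebraMap ℂ B d * t + w')
            = algebraMap ℂ B c * algebraMap ℂ B d * (t * t)
              + algebraMap ℂ B c * (t * w') + algebraMap ℂ B d * (w * t) + w * w' := by ring
          _ = _ := by rw [e1, e2, e3]; ring
      rw [key]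
      exact Submodule.smul_mem _ _ (Submodule.mem_span_singleton_self _)
    have hqspan : (m * m).restrictScalars ℂ ≤ Submodule.span ℂ {t * t} := by
      intro x hx
      have hx' : x ∈ m * m := hx
      exact Submodule.mul_induction_on hx' (fun u hu v hv => hprod u hu v hv)
        (fun a b ha hb => Submodule.add_mem _ ha hb)
    have ht3 : t ^ 3 = 0 := by
      have h1 : t * t ∈ m * m := Ideal.mul_mem_mul htp htp
      have h2 : (t * t) * t ∈ (m * m) * m := Ideal.mul_mem_mul h1 htp
      rw [hr0] at h2
      have h4 : (t * t) * t = 0 := by simpa using h2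
      calc t ^ 3 = (t * t) * t := by ring
        _ = 0 := h4
    set f : Polynomial ℂ →ₐ[ℂ] B := Polynomial.aeval t with hf
    have hfsurj : Function.Surjective f := by
      have hrange : (⊤ : Submodule ℂ B) ≤ Subalgebra.toSubmodule f.range := by
        rw [htop]
        refine sup_le ?_ ?_
        · rw [Submodule.span_le, Set.singleton_subset_iff]
          exact (Subalgebra.mem_toSubmodule _).mpr (one_mem _)
        · rw [← hps]
          refine sup_le ?_ (hqspan.trans ?_)
          · rw [Submodule.span_le, Set.singleton_subset_iff]
            exact (Subalgebra.mem_toSubmodule _).mpr ⟨Polynomial.X, by rw [hf]; simp⟩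
          · rw [Submodule.span_le, Set.singleton_subset_iff]
            exact (Subalgebra.mem_toSubmodule _).mpr
              ⟨Polynomial.X * Polynomial.X, by rw [hf]; simp⟩
      intro x
      exact (Subalgebra.mem_toSubmodule _).mp (hrange Submodule.mem_top)
    have hker : ∀ a ∈ Ideal.span {(Polynomial.X : Polynomial ℂ) ^ 3}, f a = 0 := by
      intro a ha
      rw [Ideal.mem_span_singleton] at ha
      obtain ⟨q, rfl⟩ := ha
      rw [map_mul, map_pow, hf, Polynomial.aeval_X, ht3, zero_mul]
    set g : Qtwo →ₐ[ℂ] B := Ideal.Quotient.liftₐ _ f hker with hg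
    have hgsurj : Function.Surjective g := by
      intro x
      obtain ⟨q, hq⟩ := hfsurj x
      exact ⟨polyMk 3 q, by rw [show g (polyMk 3 q) = f q from rfl, hq]⟩
    have hbij := @bij_of_surj_of_finrank_le _ _ _ _ _ _ fd_of_mf _ g hgsurj (qtwo_finrank_le.trans (by omega))
    exact ⟨(AlgEquiv.ofBijective g hbij).symm⟩

end Classification

lemma dim_two {B : Type*} [CommRing B] [Algebra ℂ B] (h2 : finrank ℂ B = 2) :
    Nonempty (B ≃ₐ[ℂ] ℂ × ℂ) ∨ Nonempty (B ≃ₐ[ℂ] Pone) := by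
  haveI := nontrivial_of_finrank_eq h2 two_ne_zero
  haveI : FiniteDimensional ℂ B := Module.finite_of_finrank_pos (by omega)
  by_cases hl : IsLocalRing B
  · right; exact local_dim_two h2
  · left
    haveI : IsArtinianRing B := isArtinian_of_tower ℂ inferInstance
    obtain ⟨e, he, h0, h1⟩ := exists_nontrivial_idem hl
    have hbij := splitHom_bijective (e := e) he
    set C := B ⧸ Ideal.span {1 - e} with hCdef
    set D := B ⧸ Ideal.span {e} with hDdef
    haveI : Nontrivial D := quot_span_idem_nontrivial he h1
    haveI : Nontrivial C := quot_span_idem_nontrivial he.one_sub (by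
      intro h; apply h0; linear_combination -h)
    haveI : Module.Finite ℂ C := Module.Finite.of_surjective
      (Ideal.Quotient.mkₐ ℂ _).toLinearMap Ideal.Quotient.mk_surjective
    haveI : Module.Finite ℂ D := Module.Finite.of_surjective
      (Ideal.Quotient.mkₐ ℂ _).toLinearMap Ideal.Quotient.mk_surjective
    have e0 : B ≃ₐ[ℂ] C × D := AlgEquiv.ofBijective _ hbij
    have heq : finrank ℂ C + finrank ℂ D = 2 := by
      have hfe := e0.toLinearEquiv.finrank_eq
      rw [h2, Module.finrank_prod] at hfe
      omega
    have hC : 0 < finrank ℂ C := Module.finrank_pos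
    have hD : 0 < finrank ℂ D := Module.finrank_pos
    obtain ⟨eC⟩ := equivComplexOfFinrankOne (B := C) (by omega)
    obtain ⟨eD⟩ := equivComplexOfFinrankOne (B := D) (by omega)
    exact ⟨e0.trans (prodCongrAlg eC.symm eD.symm)⟩

lemma dim_three {B : Type*} [CommRing B] [Algebra ℂ B] (h3 : finrank ℂ B = 3) :
    Nonempty (B ≃ₐ[ℂ] Qone) ∨ Nonempty (B ≃ₐ[ℂ] Qtwo) ∨
      Nonempty (B ≃ₐ[ℂ] ℂ × Pone) ∨ Nonempty (B ≃ₐ[ℂ] ℂ × ℂ × ℂ) := by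
  haveI := nontrivial_of_finrank_eq h3 three_ne_zero
  haveI : FiniteDimensional ℂ B := Module.finite_of_finrank_pos (by omega)
  by_cases hl : IsLocalRing B
  · rcases local_dim_three h3 with h | h
    · exact Or.inl h
    · exact Or.inr (Or.inl h)
  · haveI : IsArtinianRing B := isArtinian_of_tower ℂ inferInstance
    obtain ⟨e, he, h0, h1⟩ := exists_nontrivial_idem hl
    have hbij := splitHom_bijective (e := e) he
    set C := B ⧸ Ideal.span {1 - e} with hCdef
    set D := B ⧸ Ideal.span {e} with hDdef
    haveI : Nontrivial D := quot_span_idem_nontrivial he h1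
    haveI : Nontrivial C := quot_span_idem_nontrivial he.one_sub (by
      intro h; apply h0; linear_combination -h)
    haveI : Module.Finite ℂ C := Module.Finite.of_surjective
      (Ideal.Quotient.mkₐ ℂ _).toLinearMap Ideal.Quotient.mk_surjective
    haveI : Module.Finite ℂ D := Module.Finite.of_surjective
      (Ideal.Quotient.mkₐ ℂ _).toLinearMap Ideal.Quotient.mk_surjective
    have e0 : B ≃ₐ[ℂ] C × D := AlgEquiv.ofBijective _ hbij
    have heq : finrank ℂ C + finrank ℂ D = 3 := by
      have hfe := e0.toLinearEquiv.finrank_eq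
      rw [h3, Module.finrank_prod] at hfe
      omega
    have hC : 0 < finrank ℂ C := Module.finrank_pos
    have hD : 0 < finrank ℂ D := Module.finrank_pos
    rcases Nat.lt_or_ge (finrank ℂ C) 2 with hc1 | hc2
    · obtain ⟨eC⟩ := equivComplexOfFinrankOne (B := C) (by omega)
      rcases dim_two (B := D) (by omega) with ⟨⟨eD⟩⟩ | ⟨⟨eD⟩⟩
      · right; right; right
        exact ⟨e0.trans (prodCongrAlg eC.symm eD)⟩
      · right; right; left
        exact ⟨e0.trans (prodCongrAlg eC.symm eD)⟩
    · obtain ⟨eD⟩ := equivComplexOfFinrankOne (B := D) (by omega)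
      rcases dim_two (B := C) (by omega) with ⟨⟨eC⟩⟩ | ⟨⟨eC⟩⟩
      · right; right; right
        exact ⟨e0.trans ((prodCongrAlg eC eD.symm).trans (prodCommAlg _ _))⟩
      · right; right; left
        exact ⟨e0.trans ((prodCongrAlg eC eD.symm).trans (prodCommAlg _ _))⟩


theorem three_dimensional_algebras_classification :
    (∀ (A : Type) [CommRing A] [Algebra ℂ A], Module.finrank ℂ A = 3 →
      (Nonempty (A ≃ₐ[ℂ] Qone) ∨ Nonempty (A ≃ₐ[ℂ] Qtwo) ∨
       Nonempty (A ≃ₐ[ℂ] Qthree) ∨ Nonempty (A ≃ₐ[ℂ] Qfour))) ∧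
    ¬ Nonempty (Qone ≃ₐ[ℂ] Qtwo) ∧ ¬ Nonempty (Qone ≃ₐ[ℂ] Qthree) ∧
    ¬ Nonempty (Qone ≃ₐ[ℂ] Qfour) ∧ ¬ Nonempty (Qtwo ≃ₐ[ℂ] Qthree) ∧
    ¬ Nonempty (Qtwo ≃ₐ[ℂ] Qfour) ∧ ¬ Nonempty (Qthree ≃ₐ[ℂ] Qfour) := by
  refine ⟨?_, ?_, ?_, ?_, ?_, ?_, ?_⟩
  · intro A _ _ hA
    exact dim_three hA
  · rintro ⟨e⟩
    have ha : (e.symm xQ2) ^ 3 = 0 := by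
      rw [← map_pow, xQ2_cube, map_zero]
    have hb := qone_cube _ ha
    apply xQ2_sq_ne
    have h1 : xQ2 ^ 2 = e ((e.symm xQ2) ^ 2) := by rw [map_pow, e.apply_symm_apply]
    rw [h1, hb, map_zero]
  · rintro ⟨e⟩
    exact not_local_Qthree (IsLocalRing.of_surjective' (e : Qone →+* ℂ × Pone) e.surjective)
  · rintro ⟨e⟩
    exact not_local_Qfour (IsLocalRing.of_surjective' (e : Qone →+* ℂ × ℂ × ℂ) e.surjective)
  · rintro ⟨e⟩
    exact not_local_Qthree (IsLocalRing.of_surjective' (e : Qtwo →+* ℂ × Pone) e.surjective)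
  · rintro ⟨e⟩
    exact not_local_Qfour (IsLocalRing.of_surjective' (e : Qtwo →+* ℂ × ℂ × ℂ) e.surjective)
  · rintro ⟨e⟩
    have ha : ((0 : ℂ), xP) ≠ (0 : ℂ × Pone) := fun h => xP_ne (congrArg Prod.snd h)
    have h2 : ((0 : ℂ), xP) ^ 2 = (0 : ℂ × Pone) := Prod.ext (by simp) (by simp [xP_sq])
    have h3 : (e ((0 : ℂ), xP)) ^ 2 = 0 := by rw [← map_pow, h2, map_zero]
    have h4 : e ((0 : ℂ), xP) = 0 := IsNilpotent.eq_zero ⟨2, h3⟩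
    apply ha
    have h5 := congrArg e.symm h4
    rwa [e.symm_apply_apply, map_zero] at h5
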